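/- Assume (A1). For all N ≥ 1, n ≥ 0 and k ≥ 1, the Dobrushin coefficient of the k-step particle filter kernel satisfies β_TV(𝐌_{n,n+k}) ≤ (1 − ε^N)^k, where ε = (M̲/M̄)². -/

import Mathlib

open MeasureTheory ProbabilityTheory ENNReal Filter

noncomputable section

/-- Total variation distance between measures. -/
def tvDist {E : Type*} [MeasurableSpace E] (μ ν : Measure E) : ℝ :=
  ⨆ A : {s : Set E // MeasurableSet s}, |(μ A.1).toReal - (ν A.1).toReal|

/-- Dobrushin contraction coefficient of a Markov kernel. -/
def dobrushin {E : Type*} [MeasurableSpace E] (M : Kernel E E) : ℝ :=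
  ⨆ x, ⨆ y, tvDist (M x) (M y)

/-- Boltzmann–Gibbs update Ψ. -/
def BG {E : Type*} [MeasurableSpace E] (G : E → ℝ) (μ : Measure E) : Measure E :=
  (∫⁻ x, ENNReal.ofReal (G x) ∂μ)⁻¹ • μ.withDensity fun x => ENNReal.ofReal (G x)

/-- One-step map `Φ_j(μ) = Ψ_{j-1}(μ) M_j` (for `j ≥ 1`). -/
def Phi {E : Type*} [MeasurableSpace E] (G : ℕ → E → ℝ) (M : ℕ → Kernel E E)
    (j : ℕ) (μ : Measure E) : Measure E :=
  (BG (G (j - 1)) μ).bind (M j)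

/-- Iterated map `Φ_{0,n}`. -/
def PhiComp {E : Type*} [MeasurableSpace E] (G : ℕ → E → ℝ) (M : ℕ → Kernel E E) :
    ℕ → Measure E → Measure E
  | 0 => id
  | n + 1 => fun μ => Phi G M (n + 1) (PhiComp G M n μ)

/-- Empirical measure of `N` particles. -/
def empMeas {E : Type*} [MeasurableSpace E] {N : ℕ} (x : Fin N → E) : Measure E :=
  ((N : ℝ≥0∞))⁻¹ • ∑ i, Measure.dirac (x i)

/-- Reference-perturbed empirical measure (conditional particle filter). -/
def cEmp {E : Type*} [MeasurableSpace E] {N : ℕ} (xstar : E) (x : Fin N → E) : Measure E :=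
  ((N : ℝ≥0∞) + 1)⁻¹ • (Measure.dirac xstar + ∑ i, Measure.dirac (x i))

/-- Composition of kernels `𝐌_{n,n+k} = 𝐌_{n+k} ∘ ⋯ ∘ 𝐌_{n+1}`. -/
def kernelComp {α : Type*} [MeasurableSpace α] (K : ℕ → Kernel α α) (n : ℕ) :
    ℕ → Kernel α α
  | 0 => Kernel.id
  | k + 1 => (K (n + k + 1)).comp (kernelComp K n k)

/-- Perturbed Boltzmann–Gibbs update `Ψ̂`. -/
def hatBG {E : Type*} [MeasurableSpace E] (G : E → ℝ) (xstar : E) (N : ℕ) (μ : Measure E) :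
    Measure E :=
  BG G (((N : ℝ≥0∞) + 1)⁻¹ • Measure.dirac xstar + ((N : ℝ≥0∞) / ((N : ℝ≥0∞) + 1)) • μ)

/-- `L^p` norm of a real random variable. -/
def lpN {Ω : Type*} [MeasurableSpace Ω] (P : Measure Ω) (p : ℝ) (X : Ω → ℝ) : ℝ :=
  (∫ ω, |X ω| ^ p ∂P) ^ (1 / p)

/-- Oscillation of a real-valued function. -/
def osc {E : Type*} (f : E → ℝ) : ℝ := ⨆ x, ⨆ y, (f x - f y)

/-- Squared Hellinger distance with respect to a dominating measure `lam`. -/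
def hellingerSq {E : Type*} [MeasurableSpace E] (lam P Q : Measure E) : ℝ :=
  1 - (∫⁻ x, (P.rnDeriv lam x * Q.rnDeriv lam x) ^ (1 / 2 : ℝ) ∂lam).toReal

/-- `Qaux G m lam g k = Q_{k,k+g}`, defined through the densities `m` of the kernels. -/
def Qaux {E : Type*} [MeasurableSpace E] (G : ℕ → E → ℝ) (m : ℕ → E → E → ℝ)
    (lam : Measure E) : ℕ → ℕ → (E → ℝ) → E → ℝ
  | 0, _, φ => φ
  | g + 1, k, φ => fun x => G k x * ∫ y, m (k + 1) x y * Qaux G m lam g (k + 1) φ y ∂lam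

end


section AuxLemmas
open MeasureTheory ProbabilityTheory ENNReal Set

lemma outer_pi_mono {ι : Type*} [Fintype ι] {α : ι → Type*}
    (m₁ m₂ : ∀ i, OuterMeasure (α i)) (h : ∀ i, m₁ i ≤ m₂ i) :
    OuterMeasure.pi m₁ ≤ OuterMeasure.pi m₂ := by
  rw [OuterMeasure.pi, OuterMeasure.pi, OuterMeasure.le_boundedBy]
  intro s
  refine le_trans (OuterMeasure.boundedBy_le s) ?_
  exact Finset.prod_le_prod' fun i _ => h i _

lemma measure_pi_mono {ι : Type*} [Fintype ι] {α : ι → Type*} [∀ i, MeasurableSpace (α i)]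
    (μ ν : ∀ i, Measure (α i)) (h : ∀ i, μ i ≤ ν i) : Measure.pi μ ≤ Measure.pi ν := by
  rw [Measure.le_iff]
  intro s hs
  rw [Measure.pi_def, Measure.pi_def, toMeasure_apply _ _ hs, toMeasure_apply _ _ hs]
  exact outer_pi_mono _ _ (fun i => (Measure.le_iff'.mp (h i))) s

lemma kernelComp_prob {Ω : Type*} [MeasurableSpace Ω] (κ : ℕ → Kernel Ω Ω) (n : ℕ)
    (hprob : ∀ j x, n + 1 ≤ j → IsProbabilityMeasure ((κ j) x)) :
    ∀ k x, IsProbabilityMeasure ((kernelComp κ n k) x) := by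
  intro k
  induction k with
  | zero =>
    intro x
    simp only [kernelComp, Kernel.id_apply]
    infer_instance
  | succ k ih =>
    intro x
    constructor
    have : kernelComp κ n (k + 1) = (κ (n + k + 1)).comp (kernelComp κ n k) := rfl
    rw [this, Kernel.comp_apply, Measure.bind_apply MeasurableSet.univ (Kernel.measurable _).aemeasurable]
    have h1 : ∀ z, (κ (n + k + 1)) z Set.univ = 1 :=
      fun z => (hprob _ z (by omega)).measure_univ
    simp only [h1]
    haveI := ih x
    simp

lemma contract_lemma {Ω : Type*} [MeasurableSpace Ω] (κ : ℕ → Kernel Ω Ω) (n : ℕ)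
    (π' : Measure Ω) (δ : ℝ≥0∞) (hπδ : π' Set.univ + δ = 1)
    (hmin : ∀ j, n + 1 ≤ j → ∀ x, π' ≤ (κ j) x)
    (hprob : ∀ j x, n + 1 ≤ j → IsProbabilityMeasure ((κ j) x)) :
    ∀ (k : ℕ) (f : Ω → ℝ≥0∞), Measurable f → (∀ z, f z ≤ 1) → ∀ x y,
      ∫⁻ z, f z ∂((kernelComp κ n k) x) ≤ ∫⁻ z, f z ∂((kernelComp κ n k) y) + δ ^ k := by
  intro k
  induction k with
  | zero =>
    intro f hf hf1 x y
    have hx : ∀ w : Ω, ∫⁻ z, f z ∂((kernelComp κ n 0) w) = f w := by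
      intro w
      simp only [kernelComp, Kernel.id_apply]
      exact lintegral_dirac' w hf
    rw [hx x, hx y, pow_zero]
    exact le_trans (hf1 x) le_add_self
  | succ k ih =>
    intro f hf hf1 x y
    have hjge : n + 1 ≤ n + k + 1 := by omega
    have hcomp : ∀ w, (kernelComp κ n (k + 1)) w
        = ((kernelComp κ n k) w).bind (κ (n + k + 1)) := by
      intro w
      have : kernelComp κ n (k + 1) = (κ (n + k + 1)).comp (kernelComp κ n k) := rfl
      rw [this, Kernel.comp_apply]
    have hKprob := kernelComp_prob κ n hprob
    set g : Ω → ℝ≥0∞ := fun z => ∫⁻ w, f w ∂((κ (n + k + 1)) z) with hgdef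
    have hgm : Measurable g := by
      exact (Measure.measurable_lintegral hf).comp (Kernel.measurable _)
    have hbind : ∀ w, ∫⁻ z, f z ∂((kernelComp κ n (k + 1)) w)
        = ∫⁻ z, g z ∂((kernelComp κ n k) w) := by
      intro w
      rw [hcomp, Measure.lintegral_bind (Kernel.measurable _).aemeasurable hf.aemeasurable]
    set c := ∫⁻ w, f w ∂π' with hcdef
    set c₀ := π' Set.univ with hc0def
    have hδ1 : δ ≤ 1 := by rw [← hπδ]; exact le_add_self
    have hδt : δ ≠ ∞ := (hδ1.trans_lt one_lt_top).ne
    have hcc0 : c ≤ c₀ := by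
      calc c ≤ ∫⁻ _, 1 ∂π' := lintegral_mono hf1
      _ = c₀ := lintegral_one
    have hc0le : c₀ ≤ 1 := by rw [← hπδ]; exact le_self_add
    have hct : c ≠ ∞ := ((hcc0.trans hc0le).trans_lt one_lt_top).ne
    have hadd : ∀ μ : Measure Ω, (∫⁻ w, f w ∂μ) + (∫⁻ w, 1 - f w ∂μ) = μ Set.univ := by
      intro μ
      rw [← lintegral_add_left hf]
      calc ∫⁻ w, f w + (1 - f w) ∂μ = ∫⁻ _, (1 : ℝ≥0∞) ∂μ :=
            lintegral_congr fun w => add_tsub_cancel_of_le (hf1 w)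
        _ = μ Set.univ := lintegral_one
    have hg_lb : ∀ z, c ≤ g z := fun z => lintegral_mono' (hmin _ hjge z) le_rfl
    have hg_ub : ∀ z, g z ≤ c + δ := by
      intro z
      have h1 : (∫⁻ w, 1 - f w ∂π') ≤ ∫⁻ w, 1 - f w ∂((κ (n + k + 1)) z) :=
        lintegral_mono' (hmin _ hjge z) le_rfl
      have h2 : g z + (∫⁻ w, 1 - f w ∂((κ (n + k + 1)) z)) = 1 := by
        rw [hadd]; exact (hprob _ z hjge).measure_univ
      have h3 : (∫⁻ w, 1 - f w ∂π') = c₀ - c := by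
        have := hadd π'
        rw [← hcdef, ← hc0def] at this
        exact ENNReal.eq_sub_of_add_eq hct (by rw [add_comm]; exact this)
      have h4 : g z + (c₀ - c) ≤ c₀ + δ := by
        rw [← h3]
        calc g z + (∫⁻ w, 1 - f w ∂π')
            ≤ g z + (∫⁻ w, 1 - f w ∂((κ (n + k + 1)) z)) := add_le_add le_rfl h1
          _ = 1 := h2
          _ = c₀ + δ := hπδ.symm
      have h5 : (c + δ) + (c₀ - c) = c₀ + δ := by
        rw [add_right_comm, add_tsub_cancel_of_le hcc0]
      rw [← h5] at h4
      exact (ENNReal.add_le_add_iff_right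
        (((tsub_le_self (a := c₀)).trans hc0le).trans_lt one_lt_top).ne).mp h4
    by_cases hδ0 : δ = 0
    · have hgc : ∀ z, g z = c := fun z =>
        le_antisymm (by simpa [hδ0] using hg_ub z) (hg_lb z)
      rw [hbind x, hbind y]
      have hcw : ∀ w, ∫⁻ z, g z ∂((kernelComp κ n k) w) = c := by
        intro w
        haveI := hKprob k w
        calc ∫⁻ z, g z ∂((kernelComp κ n k) w) = ∫⁻ _, c ∂((kernelComp κ n k) w) :=
              lintegral_congr hgc
          _ = c := by simp
      rw [hcw x, hcw y]
      exact le_self_add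
    · set h : Ω → ℝ≥0∞ := fun z => (g z - c) / δ with hhdef
      have hhm : Measurable h := (hgm.sub measurable_const).div_const δ
      have hh1 : ∀ z, h z ≤ 1 := by
        intro z
        rw [hhdef]
        simp only
        rw [ENNReal.div_le_iff hδ0 hδt, one_mul]
        exact tsub_le_iff_right.mpr (by rw [add_comm]; exact hg_ub z)
      have hgeq : ∀ z, g z = c + δ * h z := by
        intro z
        rw [hhdef]
        simp only
        rw [ENNReal.mul_div_cancel hδ0 hδt, add_tsub_cancel_of_le (hg_lb z)]
      have hsplit : ∀ w, ∫⁻ z, g z ∂((kernelComp κ n k) w)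
          = c + δ * ∫⁻ z, h z ∂((kernelComp κ n k) w) := by
        intro w
        haveI := hKprob k w
        calc ∫⁻ z, g z ∂((kernelComp κ n k) w)
            = ∫⁻ z, c + δ * h z ∂((kernelComp κ n k) w) := lintegral_congr hgeq
          _ = c + δ * ∫⁻ z, h z ∂((kernelComp κ n k) w) := by
              rw [lintegral_add_left measurable_const, lintegral_const_mul δ hhm,
                lintegral_const, measure_univ, mul_one]
      rw [hbind x, hbind y, hsplit x, hsplit y]
      have hih := ih h hhm hh1 x y
      calc c + δ * ∫⁻ z, h z ∂((kernelComp κ n k) x)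
          ≤ c + δ * ((∫⁻ z, h z ∂((kernelComp κ n k) y)) + δ ^ k) :=
            add_le_add le_rfl (mul_le_mul' le_rfl hih)
        _ = (c + δ * ∫⁻ z, h z ∂((kernelComp κ n k) y)) + δ ^ (k + 1) := by
            rw [mul_add, ← add_assoc, pow_succ, mul_comm δ (δ ^ k)]

lemma empMeas_prob {E : Type*} [MeasurableSpace E] {N : ℕ} (hN : 1 ≤ N) (x : Fin N → E) :
    IsProbabilityMeasure (empMeas x) := by
  constructor
  have hN0 : (N : ℝ≥0∞) ≠ 0 := Nat.cast_ne_zero.mpr (by omega)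
  simp [empMeas, Measure.smul_apply, Measure.finset_sum_apply, measure_univ,
    Finset.sum_const, Finset.card_univ, ENNReal.inv_mul_cancel hN0 (natCast_ne_top N)]

lemma BG_prob {E : Type*} [MeasurableSpace E] {Glow Ghigh : ℝ} (hG0 : 0 < Glow)
    (G' : E → ℝ) (hGb : ∀ x, Glow ≤ G' x ∧ G' x ≤ Ghigh)
    (μ : Measure E) [IsProbabilityMeasure μ] : IsProbabilityMeasure (BG G' μ) := by
  set I := ∫⁻ x, ENNReal.ofReal (G' x) ∂μ with hI
  have hlb : ENNReal.ofReal Glow ≤ I := by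
    calc ENNReal.ofReal Glow = ∫⁻ _, ENNReal.ofReal Glow ∂μ := by simp
    _ ≤ I := lintegral_mono fun z => ENNReal.ofReal_le_ofReal (hGb z).1
  have hub : I ≤ ENNReal.ofReal Ghigh := by
    calc I ≤ ∫⁻ _, ENNReal.ofReal Ghigh ∂μ :=
          lintegral_mono fun z => ENNReal.ofReal_le_ofReal (hGb z).2
    _ = ENNReal.ofReal Ghigh := by simp
  have hI0 : I ≠ 0 := by
    intro h
    rw [h] at hlb
    exact absurd (le_antisymm hlb zero_le).symm
      (by simp [ENNReal.ofReal_pos.mpr hG0, ne_eq]; positivity)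
  have hIt : I ≠ ∞ := (hub.trans_lt ofReal_lt_top).ne
  constructor
  rw [BG, Measure.smul_apply, withDensity_apply _ MeasurableSet.univ, smul_eq_mul,
    Measure.restrict_univ, ← hI]
  exact ENNReal.inv_mul_cancel hI0 hIt

lemma Phi_prob {E : Type*} [MeasurableSpace E] {Glow Ghigh : ℝ} (hG0 : 0 < Glow)
    (G : ℕ → E → ℝ) (hGb : ∀ j x, Glow ≤ G j x ∧ G j x ≤ Ghigh)
    (M : ℕ → Kernel E E) [∀ j, IsMarkovKernel (M j)] (j : ℕ)
    (μ : Measure E) [IsProbabilityMeasure μ] : IsProbabilityMeasure (Phi G M j μ) := by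
  haveI := BG_prob hG0 (G (j - 1)) (hGb (j - 1)) μ
  constructor
  rw [Phi, Measure.bind_apply MeasurableSet.univ (Kernel.measurable _).aemeasurable]
  simp [measure_univ]

lemma Phi_lb {E : Type*} [MeasurableSpace E] {Glow Ghigh Mlow : ℝ} (hG0 : 0 < Glow)
    (lam : Measure E) (G : ℕ → E → ℝ) (hGb : ∀ j x, Glow ≤ G j x ∧ G j x ≤ Ghigh)
    (M : ℕ → Kernel E E) [∀ j, IsMarkovKernel (M j)] (m : ℕ → E → E → ℝ)
    (hMk : ∀ j x, (M j) x = lam.withDensity fun y => ENNReal.ofReal (m j x y))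
    (hmb : ∀ j x y, Mlow ≤ m j x y) (j : ℕ)
    (μ : Measure E) [IsProbabilityMeasure μ] {A : Set E} (hA : MeasurableSet A) :
    ENNReal.ofReal Mlow * lam A ≤ Phi G M j μ A := by
  haveI := BG_prob hG0 (G (j - 1)) (hGb (j - 1)) μ
  rw [Phi, Measure.bind_apply hA (Kernel.measurable _).aemeasurable]
  have hstep : ∀ x, ENNReal.ofReal Mlow * lam A ≤ (M j) x A := by
    intro x
    rw [hMk j x, withDensity_apply _ hA]
    calc ENNReal.ofReal Mlow * lam A = ∫⁻ _ in A, ENNReal.ofReal Mlow ∂lam := by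
          rw [setLIntegral_const, mul_comm]
    _ ≤ ∫⁻ y in A, ENNReal.ofReal (m j x y) ∂lam :=
          lintegral_mono fun y => ENNReal.ofReal_le_ofReal (hmb j x y)
  calc ENNReal.ofReal Mlow * lam A
      = ∫⁻ _, ENNReal.ofReal Mlow * lam A ∂(BG (G (j - 1)) μ) := by simp
    _ ≤ ∫⁻ x, (M j) x A ∂(BG (G (j - 1)) μ) := lintegral_mono hstep

end AuxLemmas

/-- Lemma `easybound`: under (A1),
`β_TV(𝐌_{n,n+k}) ≤ (1 - ε^N)^k` with `ε = (M̲/M̄)²`. -/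
theorem particle_filter_easy_bound {E : Type*} [MeasurableSpace E]
    (Mlow Mhigh Glow Ghigh : ℝ)
    (hM0 : 0 < Mlow) (hM1 : Mlow ≤ Mhigh) (hG0 : 0 < Glow) (hG1 : Glow ≤ Ghigh)
    (lam : Measure E) (M : ℕ → Kernel E E) [∀ j, IsMarkovKernel (M j)]
    (m : ℕ → E → E → ℝ) (G : ℕ → E → ℝ)
    (hmm : ∀ j, Measurable (Function.uncurry (m j)))
    (hGm : ∀ j, Measurable (G j))
    (hMk : ∀ j x, (M j) x = lam.withDensity fun y => ENNReal.ofReal (m j x y))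
    (hmb : ∀ j x y, Mlow ≤ m j x y ∧ m j x y ≤ Mhigh)
    (hGb : ∀ j x, Glow ≤ G j x ∧ G j x ≤ Ghigh)
    (N : ℕ) (hN : 1 ≤ N)
    (K : ℕ → Kernel (Fin N → E) (Fin N → E))
    (hK : ∀ j, 1 ≤ j → ∀ x, (K j) x = Measure.pi fun _ : Fin N => Phi G M j (empMeas x))
    (n k : ℕ) (hk : 1 ≤ k) :
    dobrushin (kernelComp K n k) ≤ (1 - ((Mlow / Mhigh) ^ 2) ^ N) ^ k := by
  classical
  have hMh0 : 0 < Mhigh := lt_of_lt_of_le hM0 hM1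
  set εR : ℝ := (Mlow / Mhigh) ^ 2 with hεRdef
  have hr0 : 0 ≤ Mlow / Mhigh := by positivity
  have hr1 : Mlow / Mhigh ≤ 1 := div_le_one_of_le₀ hM1 hMh0.le
  have hεR0 : 0 ≤ εR := by positivity
  have hεR1 : εR ≤ 1 := by nlinarith
  have hεRN1 : εR ^ N ≤ 1 := pow_le_one₀ hεR0 hεR1
  have hεRN0 : 0 ≤ εR ^ N := pow_nonneg hεR0 N
  set r : ℝ := (1 - εR ^ N) ^ k with hrdef
  have hrnn : 0 ≤ r := pow_nonneg (by linarith) k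
  rcases isEmpty_or_nonempty E with hE | hE
  · haveI : IsEmpty (Fin N → E) := ⟨fun f => hE.false (f ⟨0, hN⟩)⟩
    rw [dobrushin, Real.iSup_of_isEmpty]
    exact hrnn
  · have x0 : E := Classical.arbitrary E
    have h1 : ∫⁻ y, ENNReal.ofReal (m 1 x0 y) ∂lam = 1 := by
      have h := measure_univ (μ := (M 1) x0)
      rwa [hMk 1 x0, withDensity_apply _ MeasurableSet.univ, Measure.restrict_univ] at h
    have hup : (1 : ℝ≥0∞) ≤ ENNReal.ofReal Mhigh * lam Set.univ := by
      rw [← h1]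
      calc ∫⁻ y, ENNReal.ofReal (m 1 x0 y) ∂lam
          ≤ ∫⁻ _, ENNReal.ofReal Mhigh ∂lam :=
            lintegral_mono fun y => ENNReal.ofReal_le_ofReal (hmb 1 x0 y).2
        _ = ENNReal.ofReal Mhigh * lam Set.univ := lintegral_const _
    have hdown : ENNReal.ofReal Mlow * lam Set.univ ≤ 1 := by
      rw [← h1]
      calc ENNReal.ofReal Mlow * lam Set.univ
          = ∫⁻ _, ENNReal.ofReal Mlow ∂lam := (lintegral_const _).symm
        _ ≤ ∫⁻ y, ENNReal.ofReal (m 1 x0 y) ∂lam :=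
            lintegral_mono fun y => ENNReal.ofReal_le_ofReal (hmb 1 x0 y).1
    have hMl0 : (ENNReal.ofReal Mlow) ≠ 0 := (ENNReal.ofReal_pos.mpr hM0).ne'
    have hMh0' : (ENNReal.ofReal Mhigh) ≠ 0 := (ENNReal.ofReal_pos.mpr hMh0).ne'
    have hlamt : lam Set.univ ≠ ∞ := by
      intro h
      rw [h, ENNReal.mul_top hMl0] at hdown
      exact absurd hdown (by simp)
    have hlam0 : lam Set.univ ≠ 0 := by
      intro h
      rw [h, mul_zero] at hup
      exact absurd hup (by simp)
    set εE : ℝ≥0∞ := ENNReal.ofReal εR with hεEdef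
    have hεE1 : εE ≤ 1 := ENNReal.ofReal_le_one.mpr hεR1
    set ν₁ : Measure E := (εE / lam Set.univ) • lam with hν₁def
    have hinvle : (ENNReal.ofReal Mhigh)⁻¹ ≤ lam Set.univ := by
      rw [ENNReal.inv_le_iff_le_mul (fun _ => hMh0') (fun h => absurd h ENNReal.ofReal_ne_top)]
      exact hup
    have hsc : εE / lam Set.univ ≤ ENNReal.ofReal Mlow := by
      rw [ENNReal.div_le_iff hlam0 hlamt]
      calc εE ≤ ENNReal.ofReal (Mlow / Mhigh) :=
            ENNReal.ofReal_le_ofReal (by nlinarith)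
        _ = ENNReal.ofReal Mlow / ENNReal.ofReal Mhigh := ENNReal.ofReal_div_of_pos hMh0
        _ = ENNReal.ofReal Mlow * (ENNReal.ofReal Mhigh)⁻¹ := div_eq_mul_inv _ _
        _ ≤ ENNReal.ofReal Mlow * lam Set.univ := mul_le_mul' le_rfl hinvle
    have hmin1 : ∀ (j : ℕ) (z : Fin N → E), ν₁ ≤ Phi G M j (empMeas z) := by
      intro j z
      haveI := empMeas_prob hN z
      rw [Measure.le_iff]
      intro A hA
      calc ν₁ A = εE / lam Set.univ * lam A := by rw [hν₁def, Measure.smul_apply, smul_eq_mul]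
        _ ≤ ENNReal.ofReal Mlow * lam A := mul_le_mul' hsc le_rfl
        _ ≤ Phi G M j (empMeas z) A :=
            Phi_lb hG0 lam G hGb M m hMk (fun j x y => (hmb j x y).1) j (empMeas z) hA
    have hν₁u : ν₁ Set.univ = εE := by
      rw [hν₁def, Measure.smul_apply, smul_eq_mul, ENNReal.div_mul_cancel hlam0 hlamt]
    haveI : IsFiniteMeasure ν₁ :=
      ⟨by rw [hν₁u]; exact lt_of_le_of_lt hεE1 ENNReal.one_lt_top⟩
    set π' : Measure (Fin N → E) := Measure.pi (fun _ : Fin N => ν₁) with hπ'def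
    have hπu : π' Set.univ = εE ^ N := by
      rw [hπ'def, Measure.pi_univ]
      simp [hν₁u, Finset.prod_const, Finset.card_univ]
    have hεEN : εE ^ N ≤ 1 := pow_le_one' hεE1 N
    set δ : ℝ≥0∞ := 1 - εE ^ N with hδdef
    have hπδ : π' Set.univ + δ = 1 := by rw [hπu, hδdef]; exact add_tsub_cancel_of_le hεEN
    have hprobK : ∀ j x, n + 1 ≤ j → IsProbabilityMeasure ((K j) x) := by
      intro j x hj
      rw [hK j (by omega) x]
      haveI := empMeas_prob hN x
      haveI : ∀ _i : Fin N, IsProbabilityMeasure (Phi G M j (empMeas x)) :=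
        fun _ => Phi_prob hG0 G hGb M j _
      infer_instance
    have hminK : ∀ j, n + 1 ≤ j → ∀ x, π' ≤ (K j) x := by
      intro j hj x
      rw [hK j (by omega) x]
      exact measure_pi_mono _ _ (fun _ => hmin1 j x)
    have main := contract_lemma K n π' δ hπδ hminK hprobK k
    have hbound : ∀ (x y : Fin N → E) (A : Set (Fin N → E)), MeasurableSet A →
        (kernelComp K n k) x A ≤ (kernelComp K n k) y A + δ ^ k := by
      intro x y A hA
      have hind : ∀ z, A.indicator (1 : (Fin N → E) → ℝ≥0∞) z ≤ 1 := by
        intro z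
        by_cases hz : z ∈ A <;> simp [hz]
      have h := main (A.indicator 1) (measurable_one.indicator hA) hind x y
      rwa [lintegral_indicator_one hA, lintegral_indicator_one hA] at h
    have hδr : δ ^ k = ENNReal.ofReal r := by
      have h1 : εE ^ N = ENNReal.ofReal (εR ^ N) := by
        rw [hεEdef, ← ENNReal.ofReal_pow hεR0]
      have h2 : δ = ENNReal.ofReal (1 - εR ^ N) := by
        rw [hδdef, ENNReal.ofReal_sub _ hεRN0, ENNReal.ofReal_one, h1]
      rw [h2, hrdef, ← ENNReal.ofReal_pow (by linarith)]
    have hKp := kernelComp_prob K n hprobK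
    rw [dobrushin]
    refine Real.iSup_le (fun x => Real.iSup_le (fun y => ?_) hrnn) hrnn
    rw [tvDist]
    refine Real.iSup_le (fun A => ?_) hrnn
    haveI := hKp k x
    haveI := hKp k y
    set a := (kernelComp K n k) x A.1 with hadef
    set b := (kernelComp K n k) y A.1 with hbdef
    have ha1 : a ≤ 1 := prob_le_one
    have hb1 : b ≤ 1 := prob_le_one
    have hat : a ≠ ∞ := (ha1.trans_lt ENNReal.one_lt_top).ne
    have hbt : b ≠ ∞ := (hb1.trans_lt ENNReal.one_lt_top).ne
    have hab : a ≤ b + ENNReal.ofReal r := by rw [← hδr]; exact hbound x y A.1 A.2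
    have hba : b ≤ a + ENNReal.ofReal r := by rw [← hδr]; exact hbound y x A.1 A.2
    have habr : a.toReal ≤ b.toReal + r := by
      have h := ENNReal.toReal_mono
        (ENNReal.add_ne_top.mpr ⟨hbt, ENNReal.ofReal_ne_top⟩) hab
      rwa [ENNReal.toReal_add hbt ENNReal.ofReal_ne_top, ENNReal.toReal_ofReal hrnn] at h
    have hbar : b.toReal ≤ a.toReal + r := by
      have h := ENNReal.toReal_mono
        (ENNReal.add_ne_top.mpr ⟨hat, ENNReal.ofReal_ne_top⟩) hba
      rwa [ENNReal.toReal_add hat ENNReal.ofReal_ne_top, ENNReal.toReal_ofReal hrnn] at h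
    rw [abs_sub_le_iff]
    constructor <;> linarith
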